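/- Let I ⊆ R be a nonzero, proper S_n-invariant monomial ideal and let ρ = (∞^{p_0},d_1^{p_1},…,d_s^{p_s}) ∈ Λ*_max(I) with ∞ > d_1 > ⋯ > d_s ≥ 0. Set c = (p_1−1,…,p_s−1). Then Γ^{ρ̃,c}(I) = {∅}, the simplicial complex on [s] whose only face is the empty face. -/

import Mathlib

open scoped BigOperators

noncomputable section
open Classical

/-! ## Generic (labeled) simplicial chain complexes and reduced homology over a field -/

section Homology

variable (K : Type) [Field K] {α : Type}

/-- Index type for chains: elements of `S` whose face (second component) has `j` elements. -/
def ChainIdx (S : Set (α × Finset ℕ)) (j : ℕ) : Type :=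
  {q : α × Finset ℕ // q ∈ S ∧ q.2.card = j}

/-- The boundary of a basis element, with the usual simplicial signs. -/
noncomputable def bdElt (S : Set (α × Finset ℕ)) (j : ℕ) (q : ChainIdx S (j + 1)) :
    ChainIdx S j →₀ K :=
  ∑ v ∈ q.1.2,
    if h : (q.1.1, q.1.2.erase v) ∈ S ∧ (q.1.2.erase v).card = j then
      ((-1 : K) ^ (q.1.2.filter (fun u => u ≤ v)).card) •
        Finsupp.single (⟨(q.1.1, q.1.2.erase v), h⟩ : ChainIdx S j) (1 : K)
    else 0

/-- The simplicial boundary map. -/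
noncomputable def bd (S : Set (α × Finset ℕ)) (j : ℕ) :
    (ChainIdx S (j + 1) →₀ K) →ₗ[K] (ChainIdx S j →₀ K) :=
  Finsupp.linearCombination K (bdElt K S j)

/-- Cycles in homological degree `j` (chains are indexed by the cardinality of faces;
degree `j` corresponds to reduced topological degree `j - 1`). -/
noncomputable def cycles (S : Set (α × Finset ℕ)) : (j : ℕ) → Submodule K (ChainIdx S j →₀ K)
  | 0 => ⊤
  | (i + 1) => LinearMap.ker (bd K S i)

/-- `rhd K S j` is the dimension of the reduced homology group `H̃_{j-1}` of the complex `S`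
(the chain groups being finite dimensional, this is `dim` cycles `- dim` boundaries). -/
noncomputable def rhd (S : Set (α × Finset ℕ)) (j : ℕ) : ℕ :=
  Module.finrank K (cycles K S j) -
    Module.finrank K (LinearMap.range (bd K S j) ⊓ cycles K S j : Submodule K _)

/-- `hdim K S j = dim_K H̃_j(S; K)`, for `j : ℤ` (zero for `j ≤ -2`). -/
noncomputable def hdim (S : Set (α × Finset ℕ)) (j : ℤ) : ℕ :=
  if 0 ≤ j + 1 then rhd K S (j + 1).toNat else 0

/-- View an unlabeled collection of faces as a labeled one (labels in `Unit`). -/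
def lab (Δ : Set (Finset ℕ)) : Set (Unit × Finset ℕ) := {q | q.2 ∈ Δ}

/-- Dimension of reduced homology `H̃_{j-1}(Δ; K)` of a collection `Δ` of finite sets. -/
noncomputable def rhd0 (Δ : Set (Finset ℕ)) (j : ℕ) : ℕ := rhd K (lab Δ) j

/-- Dimension of reduced homology `H̃_j(Δ; K)`, `j : ℤ`. -/
noncomputable def hdim0 (Δ : Set (Finset ℕ)) (j : ℤ) : ℕ := hdim K (lab Δ) j

end Homology

/-! ## Monomial ideals in `k[x_1, …, x_n]`, invariant under the symmetric group -/

section Poly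

variable (K : Type) [Field K] (n : ℕ)

/-- The monomial `x^a` in `k[x_1, …, x_n]`. -/
noncomputable def mon (a : Fin n → ℕ) : MvPolynomial (Fin n) K :=
  MvPolynomial.monomial (Finsupp.equivFunOnFinite.symm a) 1

/-- A monomial ideal: an ideal generated by a set of monomials. -/
def IsMonomialIdeal (I : Ideal (MvPolynomial (Fin n) K)) : Prop :=
  ∃ S : Set (Fin n → ℕ), I = Ideal.span (mon K n '' S)

/-- `I` is invariant under the action of `S_n` permuting the variables. -/
def IsSymmetricIdeal (I : Ideal (MvPolynomial (Fin n) K)) : Prop :=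
  ∀ σ : Equiv.Perm (Fin n), Ideal.map (MvPolynomial.rename σ).toRingHom I = I

end Poly

/-! ## Partitions given by blocks `(d_1^{p_1}, …, d_s^{p_s}, 0^{p_{s+1}})` -/

section Blocks

/-- `cumsum p k = p 0 + ⋯ + p (k-1)`. -/
def cumsum (p : ℕ → ℕ) (k : ℕ) : ℕ := ∑ j ∈ Finset.range k, p j

/-- The index of the block (among blocks `0, …, s`) containing position `i`,
for blocks of sizes `p 0, …, p (s-1)` followed by a final block. -/
def blkOf (p : ℕ → ℕ) (s i : ℕ) : ℕ :=
  ((Finset.range s).filter fun k => cumsum p (k + 1) ≤ i).card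

/-- The partition `μ = (d_0^{p_0}, …, d_{s-1}^{p_{s-1}}, 0^{p_s})` (0-indexed blocks),
as a function of the position `i ∈ {0, …, n-1}` where `n = cumsum p (s+1)`. -/
def muOf (s : ℕ) (d p : ℕ → ℕ) (i : ℕ) : ℕ :=
  if blkOf p s i < s then d (blkOf p s i) else 0

/-- The partition `μ ∖ c`, obtained from `μ` by replacing, for each `k`, the last `c k` of
the parts equal to `d k` by `d k - 1`. -/
def muMinus (s : ℕ) (d p c : ℕ → ℕ) (i : ℕ) : ℕ :=
  if blkOf p s i < s then
    (if p (blkOf p s i) - c (blkOf p s i) ≤ i - cumsum p (blkOf p s i) then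
      d (blkOf p s i) - 1 else d (blkOf p s i))
  else 0

/-- Indicator vector of a finite set `F`. -/
def eF (F : Finset ℕ) (j : ℕ) : ℕ := if j ∈ F then 1 else 0

end Blocks

/-! ## The simplicial complexes `Δ^{μ,c}(I)` and `Γ^{μ,c}(I)` -/

section Complexes

variable (K : Type) [Field K] (n : ℕ)

/-- The simplicial complex `Δ^{μ,c}(I) = {F ⊆ [s] : μ ∖ (c + e_F) ∈ P(I)}` (vertices are
`0, …, s-1`), for `μ = (d_0^{p_0}, …, d_{s-1}^{p_{s-1}}, 0^{p_s})` and `c ≤ p(μ)`. -/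
def DeltaCx (I : Ideal (MvPolynomial (Fin n) K)) (s : ℕ) (d p c : ℕ → ℕ) :
    Set (Finset ℕ) :=
  {F | F ⊆ Finset.range s ∧
    mon K n (fun i => muMinus s d p (fun j => c j + eF F j) i.val) ∈ I}

/-- The Alexander dual complex `Γ^{μ,c}(I) = {F ⊆ [s] : μ ∖ (c + e_{[s]∖F}) ∈ O(I)}`. -/
def GammaCx (I : Ideal (MvPolynomial (Fin n) K)) (s : ℕ) (d p c : ℕ → ℕ) :
    Set (Finset ℕ) :=
  {F | F ⊆ Finset.range s ∧
    mon K n (fun i => muMinus s d p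
      (fun j => c j + (if j < s ∧ j ∉ F then 1 else 0)) i.val) ∉ I}

/-- `γ_i^{μ,c}(I) = dim_K H̃_{i-1}(Δ^{μ,c}(I); K)`. -/
noncomputable def gammaDim (I : Ideal (MvPolynomial (Fin n) K)) (s : ℕ) (d p c : ℕ → ℕ)
    (i : ℕ) : ℕ :=
  rhd0 K (DeltaCx K n I s d p c) i

end Complexes

/-! ## Multigraded Tor via the Koszul complex

For a monomial ideal `I`, the multidegree-`a` strand of the Koszul complex `K_•(I)` is the
(shifted) reduced chain complex of the simplicial complex
`Δ_a^I = {F ⊆ [n] : a - e_F ≥ 0, x^{a - e_F} ∈ I}`, so that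
`dim_K Tor_i(I, K)_a = dim_K H̃_{i-1}(Δ_a^I; K)`, and similarly for `R/I` with the
condition `x^{a-e_F} ∉ I`. -/

section Tor

variable (K : Type) [Field K] (n : ℕ)

/-- The Koszul simplicial complex of the ideal `I` in multidegree `a`. -/
def KosI (I : Ideal (MvPolynomial (Fin n) K)) (a : Fin n → ℕ) : Set (Finset ℕ) :=
  {F | F ⊆ Finset.range n ∧ (∀ i : Fin n, (i : ℕ) ∈ F → 1 ≤ a i) ∧
    mon K n (fun i => a i - eF F i.val) ∈ I}

/-- The Koszul complex of `R/I` in multidegree `a`. -/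
def KosQ (I : Ideal (MvPolynomial (Fin n) K)) (a : Fin n → ℕ) : Set (Finset ℕ) :=
  {F | F ⊆ Finset.range n ∧ (∀ i : Fin n, (i : ℕ) ∈ F → 1 ≤ a i) ∧
    mon K n (fun i => a i - eF F i.val) ∉ I}

/-- `dim_K Tor_i(I, K)_a`, for a monomial ideal `I` and a multidegree `a ∈ ℤ^n`
(components with a negative coordinate vanish, so only `a ∈ ℕ^n` is needed). -/
noncomputable def torDim (I : Ideal (MvPolynomial (Fin n) K)) (i : ℕ) (a : Fin n → ℕ) : ℕ :=
  rhd0 K (KosI K n I a) i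

/-- `dim_K Tor_i(R/I, K)_a` for a monomial ideal `I`. -/
noncomputable def torQDim (I : Ideal (MvPolynomial (Fin n) K)) (i : ℕ) (a : Fin n → ℕ) : ℕ :=
  rhd0 K (KosQ K n I a) i

/-- `dim_K Tor_i(I, K)_{⟨μ⟩}`: the sum of `dim_K Tor_i(I, K)_a` over all rearrangements `a`
of the partition `μ`. -/
noncomputable def torDimSym (I : Ideal (MvPolynomial (Fin n) K)) (i : ℕ) (μ : Fin n → ℕ) : ℕ :=
  ∑ a ∈ Finset.image (fun σ : Equiv.Perm (Fin n) => μ ∘ σ) Finset.univ, torDim K n I i a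

/-- `dim_K Tor_i(R/I, K)_{⟨μ⟩}`. -/
noncomputable def torQDimSym (I : Ideal (MvPolynomial (Fin n) K)) (i : ℕ) (μ : Fin n → ℕ) : ℕ :=
  ∑ a ∈ Finset.image (fun σ : Equiv.Perm (Fin n) => μ ∘ σ) Finset.univ, torQDim K n I i a

end Tor

/-! ## Extended partitions in `P_n^∞` and the dual generators of an `S_n`-invariant
monomial ideal -/

section ExtendedPartitions

variable (K : Type) [Field K] (n : ℕ)

/-- `ℓ(μ)`: the number of entries of `μ ∈ P_n^∞` equal to `∞`. -/
def ellInf (μ : Fin n → ℕ∞) : ℕ := (Finset.univ.filter fun i => μ i = ⊤).card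

/-- The largest finite entry of `μ ∈ P_n^∞` (i.e. the first finite entry, `μ` being
weakly decreasing). -/
def topVal (μ : Fin n → ℕ∞) : ℕ := Finset.univ.sup fun i => (μ i).toNat

/-- `μ^+ ∈ P_n`: each `∞` entry of `μ` is replaced by (largest finite entry)` + 1`. -/
def plusOf (μ : Fin n → ℕ∞) (i : Fin n) : ℕ :=
  if μ i = ⊤ then topVal n μ + 1 else (μ i).toNat

/-- `μ̃ = μ^+ + (0^{ℓ(μ)}, 1^{n - ℓ(μ)}) ∈ P_n`. -/
def tildeOf (μ : Fin n → ℕ∞) (i : Fin n) : ℕ :=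
  if μ i = ⊤ then topVal n μ + 1 else (μ i).toNat + 1

/-- The ideal `Q_μ = ∩_{σ ∈ S_n} σ((x_k^{μ_k + 1}, …, x_n^{μ_n + 1}))`, where
`μ_k, …, μ_n` are the finite entries of `μ ∈ P_n^∞`. -/
noncomputable def Qgen (μ : Fin n → ℕ∞) : Ideal (MvPolynomial (Fin n) K) :=
  ⨅ σ : Equiv.Perm (Fin n),
    Ideal.map (MvPolynomial.rename σ).toRingHom
      (Ideal.span {g | ∃ i : Fin n, μ i ≠ ⊤ ∧ g = MvPolynomial.X i ^ ((μ i).toNat + 1)})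

/-- `Λ` is the (finite) set of dual generators of `I`, i.e. `I = ∩_{μ ∈ Λ} Q_μ` is the
irredundant presentation of `I` by ideals `Q_μ`. -/
def IsDualPresentation (I : Ideal (MvPolynomial (Fin n) K))
    (Λ : Finset (Fin n → ℕ∞)) : Prop :=
  (∀ μ ∈ Λ, Antitone μ) ∧ (I = ⨅ μ ∈ Λ, Qgen K n μ) ∧
    ∀ μ ∈ Λ, I ≠ ⨅ ρ ∈ Λ, ⨅ _ : ρ ≠ μ, Qgen K n ρ

/-- The partial order `≼` on dual generators: `μ ≼ ρ` iff `μ̃ ≤ ρ̃` (componentwise) and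
`ℓ(μ) - ℓ(ρ) ≤ |ρ̃| - |μ̃|`. -/
def preceq (μ ρ : Fin n → ℕ∞) : Prop :=
  (∀ i, tildeOf n μ i ≤ tildeOf n ρ i) ∧
    (∑ i, tildeOf n μ i) + ellInf n μ ≤ (∑ i, tildeOf n ρ i) + ellInf n ρ

/-- The extended partition `ρ = (∞^{p_0}, d_1^{p_1}, …, d_s^{p_s}) ∈ P_n^∞`
(so `n = p 0 + p 1 + ⋯ + p s`), as a function of the position `i ∈ {0, …, n-1}`. -/
def rhoOf (s : ℕ) (d p : ℕ → ℕ) (i : ℕ) : ℕ∞ :=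
  if blkOf p (s + 1) i = 0 then ⊤ else ((d (blkOf p (s + 1) i) : ℕ) : ℕ∞)

end ExtendedPartitions
namespace S8

lemma cumsum_succ (p : ℕ → ℕ) (k : ℕ) : cumsum p (k+1) = cumsum p k + p k :=
  Finset.sum_range_succ p k

lemma cumsum_one (p : ℕ → ℕ) : cumsum p 1 = p 0 := Finset.sum_range_one (f := p)

lemma cumsum_mono (p : ℕ → ℕ) {a b : ℕ} (h : a ≤ b) : cumsum p a ≤ cumsum p b :=
  Finset.sum_le_sum_of_subset (Finset.range_subset_range.2 h)

lemma blkOf_eq {p : ℕ → ℕ} {s i k : ℕ} (hk : k < s) (h1 : cumsum p k ≤ i)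
    (h2 : i < cumsum p (k+1)) : blkOf p s i = k := by
  unfold blkOf
  have : (Finset.range s).filter (fun j => cumsum p (j+1) ≤ i) = Finset.range k := by
    ext j
    simp only [Finset.mem_filter, Finset.mem_range]
    constructor
    · rintro ⟨hjs, hj⟩
      by_contra hjk
      push_neg at hjk
      exact absurd (le_trans (cumsum_mono p (by omega : k+1 ≤ j+1)) hj) (by omega)
    · intro hjk
      exact ⟨by omega, le_trans (cumsum_mono p (by omega : j+1 ≤ k)) h1⟩
  rw [this, Finset.card_range]

lemma exists_block {p : ℕ → ℕ} {s i : ℕ} (h : i < cumsum p s) :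
    ∃ k, k < s ∧ cumsum p k ≤ i ∧ i < cumsum p (k+1) := by
  induction s with
  | zero => simp [cumsum] at h
  | succ m ih =>
    by_cases hm : i < cumsum p m
    · obtain ⟨k, h1, h2, h3⟩ := ih hm
      exact ⟨k, by omega, h2, h3⟩
    · exact ⟨m, by omega, by omega, h⟩

lemma blkOf_spec {p : ℕ → ℕ} {s i : ℕ} (h : i < cumsum p s) :
    blkOf p s i < s ∧ cumsum p (blkOf p s i) ≤ i ∧ i < cumsum p (blkOf p s i + 1) := by
  obtain ⟨k, h1, h2, h3⟩ := exists_block h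
  rw [blkOf_eq h1 h2 h3]
  exact ⟨h1, h2, h3⟩

lemma blkOf_mono (p : ℕ → ℕ) (s : ℕ) {i j : ℕ} (h : i ≤ j) : blkOf p s i ≤ blkOf p s j :=
  Finset.card_le_card (fun k hk => by
    simp only [Finset.mem_filter] at hk ⊢
    exact ⟨hk.1, le_trans hk.2 h⟩)

end S8
namespace S8

variable (K : Type) [Field K] (n : ℕ)

lemma map_rename_span (μ : Fin n → ℕ∞) (σ : Equiv.Perm (Fin n)) :
    Ideal.map (MvPolynomial.rename σ).toRingHom
      (Ideal.span {g | ∃ i : Fin n, μ i ≠ ⊤ ∧ g = MvPolynomial.X i ^ ((μ i).toNat + 1)})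
    = Ideal.span ((fun f => MvPolynomial.monomial f (1 : K)) ''
        {f : Fin n →₀ ℕ | ∃ i : Fin n, μ i ≠ ⊤ ∧ f = Finsupp.single (σ i) ((μ i).toNat + 1)}) := by
  rw [Ideal.map_span]
  congr 1
  ext g
  constructor
  · rintro ⟨g', ⟨i, hi, rfl⟩, rfl⟩
    exact ⟨Finsupp.single (σ i) ((μ i).toNat + 1), ⟨i, hi, rfl⟩, by
      simp [MvPolynomial.X_pow_eq_monomial, MvPolynomial.rename_monomial, Finsupp.mapDomain_add, Finsupp.mapDomain_single]⟩
  · rintro ⟨f, ⟨i, hi, rfl⟩, rfl⟩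
    exact ⟨MvPolynomial.X i ^ ((μ i).toNat + 1), ⟨i, hi, rfl⟩, by
      simp [MvPolynomial.X_pow_eq_monomial, MvPolynomial.rename_monomial, Finsupp.mapDomain_add, Finsupp.mapDomain_single]⟩

lemma mem_Qgen_iff (μ : Fin n → ℕ∞) (a : Fin n → ℕ) :
    mon K n a ∈ Qgen K n μ ↔
      ∀ σ : Equiv.Perm (Fin n), ∃ i : Fin n, μ i ≠ ⊤ ∧ (μ i).toNat + 1 ≤ a (σ i) := by
  unfold Qgen
  rw [Submodule.mem_iInf]
  refine forall_congr' fun σ => ?_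
  rw [map_rename_span K n μ σ]
  unfold mon
  rw [MvPolynomial.mem_ideal_span_monomial_image]
  have hsupp : (MvPolynomial.monomial (Finsupp.equivFunOnFinite.symm a) (1 : K)).support
      = {Finsupp.equivFunOnFinite.symm a} := by
    rw [MvPolynomial.support_monomial]
    simp
  rw [hsupp]
  simp only [Finset.mem_singleton, forall_eq, Set.mem_setOf_eq]
  constructor
  · rintro ⟨f, ⟨i, hi, rfl⟩, hle⟩
    refine ⟨i, hi, ?_⟩
    have := Finsupp.single_le_iff.mp hle
    simpa [Finsupp.coe_equivFunOnFinite_symm] using this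
  · rintro ⟨i, hi, hle⟩
    exact ⟨Finsupp.single (σ i) ((μ i).toNat + 1), ⟨i, hi, rfl⟩,
      Finsupp.single_le_iff.mpr (by simpa [Finsupp.coe_equivFunOnFinite_symm] using hle)⟩

lemma Qgen_anti {μ ρ : Fin n → ℕ∞} (h : ∀ i, μ i ≤ ρ i) : Qgen K n ρ ≤ Qgen K n μ := by
  refine iInf_mono fun σ => Ideal.map_mono ?_
  rw [Ideal.span_le]
  rintro g ⟨i, hi, rfl⟩
  have hμi : μ i ≠ ⊤ := fun ht => hi (top_le_iff.mp (ht ▸ h i))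
  have hle : (μ i).toNat ≤ (ρ i).toNat := by
    have := h i
    lift ρ i to ℕ using hi with r
    lift μ i to ℕ using hμi with m
    simpa using this
  have : MvPolynomial.X (R := K) i ^ ((ρ i).toNat + 1)
      = MvPolynomial.X i ^ ((μ i).toNat + 1) * MvPolynomial.X i ^ ((ρ i).toNat - (μ i).toNat) := by
    rw [← pow_add]
    congr 1
    omega
  rw [this]
  exact Ideal.mul_mem_right _ _ (Ideal.subset_span ⟨i, hμi, rfl⟩)

lemma exists_perm_le {n : ℕ} (σ : Equiv.Perm (Fin n)) (i : Fin n) :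
    ∃ j, i ≤ j ∧ σ j ≤ i := by
  by_contra hc
  push_neg at hc
  have hsub : (Finset.Ici i).image σ ⊆ Finset.Ioi i := by
    intro x hx
    obtain ⟨j, hj, rfl⟩ := Finset.mem_image.mp hx
    exact Finset.mem_Ioi.mpr (hc j (Finset.mem_Ici.mp hj))
  have h1 : (Finset.Ici i).card ≤ (Finset.Ioi i).card := by
    rw [← Finset.card_image_of_injective _ σ.injective]
    exact Finset.card_le_card hsub
  have h2 : (Finset.Ioi i).card < (Finset.Ici i).card :=
    Finset.card_lt_card ⟨fun x hx => Finset.mem_Ici.mpr (le_of_lt (Finset.mem_Ioi.mp hx)),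
      fun hsub' => by simpa using Finset.mem_Ioi.mp (hsub' (Finset.mem_Ici.mpr (le_refl i)))⟩
  omega

lemma antitone_compare {n : ℕ} {a : Fin n → ℕ} {τ : Fin n → ℕ∞}
    (ha : Antitone a) (hτ : Antitone τ) (σ : Equiv.Perm (Fin n))
    (h : ∀ i, ((a (σ i) : ℕ∞)) ≤ τ i) : ∀ i, (a i : ℕ∞) ≤ τ i := by
  intro i
  obtain ⟨j, hij, hji⟩ := exists_perm_le σ i
  calc (a i : ℕ∞) ≤ (a (σ j) : ℕ∞) := by exact_mod_cast ha hji
    _ ≤ τ j := h j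
    _ ≤ τ i := hτ hij

end S8
namespace S8

/-- `d' k = d (k+1) + 1` -/
def dd (d : ℕ → ℕ) (k : ℕ) : ℕ := d (k + 1) + 1

/-- block sizes of ρ̃ -/
def pp (s : ℕ) (p : ℕ → ℕ) (k : ℕ) : ℕ :=
  if k = 0 then p 0 + p 1 else if k < s then p (k + 1) else 0

/-- `c + e_{[s] ∖ F}` -/
def cc (s : ℕ) (p : ℕ → ℕ) (F : Finset ℕ) (j : ℕ) : ℕ :=
  p (j + 1) - 1 + (if j < s ∧ j ∉ F then 1 else 0)

section Blk

variable {s : ℕ} {d p : ℕ → ℕ}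
variable (hs : 1 ≤ s)
variable (hd : ∀ k, 1 ≤ k → k + 1 ≤ s → d (k + 1) < d k)
variable (hp : ∀ k, 1 ≤ k → k ≤ s → 0 < p k)

lemma d_mono_aux (hd : ∀ k, 1 ≤ k → k + 1 ≤ s → d (k + 1) < d k) :
    ∀ t k, 1 ≤ k → k + t ≤ s → d (k + t) ≤ d k := by
  intro t
  induction t with
  | zero => intro k _ _; simp
  | succ m ih =>
    intro k hk hks
    have h1 : d (k + m + 1) < d (k + m) := hd (k + m) (by omega) (by omega)
    have h2 : d (k + m) ≤ d k := ih k hk (by omega)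
    have h3 : d (k + (m + 1)) = d (k + m + 1) := rfl
    omega

lemma d_mono (hd : ∀ k, 1 ≤ k → k + 1 ≤ s → d (k + 1) < d k) :
    ∀ k l, 1 ≤ k → k ≤ l → l ≤ s → d l ≤ d k := by
  intro k l hk hkl hls
  have := d_mono_aux hd (l - k) k hk (by omega)
  have he : k + (l - k) = l := by omega
  rwa [he] at this

lemma d_strict (hd : ∀ k, 1 ≤ k → k + 1 ≤ s → d (k + 1) < d k) :
    ∀ k l, 1 ≤ k → k < l → l ≤ s → d l < d k := by
  intro k l hk hkl hls
  have h1 : d l ≤ d (k + 1) := d_mono hd (k + 1) l (by omega) (by omega) hls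
  have h2 : d (k + 1) < d k := hd k hk (by omega)
  omega

lemma cumsum_pp (hp : ∀ k, 1 ≤ k → k ≤ s → 0 < p k) :
    ∀ k, 1 ≤ k → k ≤ s → cumsum (pp s p) k = cumsum p (k + 1) := by
  intro k hk hks
  induction k with
  | zero => omega
  | succ m ih =>
    rcases Nat.eq_zero_or_pos m with hm | hm
    · subst hm
      simp [cumsum, Finset.sum_range_succ, pp]
    · have hms : m ≤ s := by omega
      rw [cumsum_succ, ih (by omega) hms, cumsum_succ (p := p) (k := m + 1)]
      have : pp s p m = p (m + 1) := by
        unfold pp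
        have h1 : m ≠ 0 := by omega
        have h2 : m < s := by omega
        simp [h1, h2]
      omega

variable {n : ℕ} (hn : n = cumsum p (s + 1))

/-- all the information about the block of position `i < n` -/
lemma blk_spec (hp : ∀ k, 1 ≤ k → k ≤ s → 0 < p k) (hs : 1 ≤ s)
    (hn : n = cumsum p (s + 1)) {i : ℕ} (hi : i < n) :
    blkOf (pp s p) s i < s ∧ cumsum (pp s p) (blkOf (pp s p) s i) ≤ i ∧
      i < cumsum (pp s p) (blkOf (pp s p) s i + 1) := by
  apply blkOf_spec
  rw [cumsum_pp hp s hs le_rfl]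
  omega

lemma blk_top (hp : ∀ k, 1 ≤ k → k ≤ s → 0 < p k) (hs : 1 ≤ s)
    {i : ℕ} (hi : i < p 0) :
    blkOf (pp s p) s i = 0 ∧ blkOf p (s + 1) i = 0 := by
  constructor
  · apply blkOf_eq hs (by simp [cumsum])
    rw [cumsum_one]
    have : pp s p 0 = p 0 + p 1 := by simp [pp]
    omega
  · apply blkOf_eq (by omega) (by simp [cumsum])
    rw [cumsum_one]
    omega

lemma blk_fin (hp : ∀ k, 1 ≤ k → k ≤ s → 0 < p k) (hs : 1 ≤ s)
    (hn : n = cumsum p (s + 1)) {i : ℕ} (hi : i < n) (hi0 : p 0 ≤ i) :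
    blkOf p (s + 1) i = blkOf (pp s p) s i + 1 := by
  obtain ⟨hb, hb1, hb2⟩ := blk_spec hp hs hn hi
  set b := blkOf (pp s p) s i with hbdef
  apply blkOf_eq (by omega)
  · rcases Nat.eq_zero_or_pos b with h | h
    · rw [h, cumsum_one]; exact hi0
    · rw [← cumsum_pp hp b (by omega) (by omega)]; exact hb1
  · rw [← cumsum_pp hp (b + 1) (by omega) (by omega)]; exact hb2

end Blk

end S8
namespace S8

section Vals

variable {s : ℕ} {d p : ℕ → ℕ} {n : ℕ}

lemma muMinus_eval (hp : ∀ k, 1 ≤ k → k ≤ s → 0 < p k) (hs : 1 ≤ s)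
    (hn : n = cumsum p (s + 1)) {i : ℕ} (hi : i < n) (c : ℕ → ℕ) :
    muMinus s (dd d) (pp s p) c i =
      if pp s p (blkOf (pp s p) s i) - c (blkOf (pp s p) s i) ≤
          i - cumsum (pp s p) (blkOf (pp s p) s i)
      then d (blkOf (pp s p) s i + 1) else d (blkOf (pp s p) s i + 1) + 1 := by
  have hb : blkOf (pp s p) s i < s := (blk_spec hp hs hn hi).1
  unfold muMinus
  rw [if_pos hb]
  unfold dd
  split_ifs <;> omega

lemma A_bounds (hp : ∀ k, 1 ≤ k → k ≤ s → 0 < p k) (hs : 1 ≤ s)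
    (hn : n = cumsum p (s + 1)) {i : ℕ} (hi : i < n) (c : ℕ → ℕ) :
    d (blkOf (pp s p) s i + 1) ≤ muMinus s (dd d) (pp s p) c i ∧
      muMinus s (dd d) (pp s p) c i ≤ d (blkOf (pp s p) s i + 1) + 1 := by
  rw [muMinus_eval hp hs hn hi c]
  split_ifs <;> omega

lemma A_top (hp : ∀ k, 1 ≤ k → k ≤ s → 0 < p k) (hs : 1 ≤ s)
    (hn : n = cumsum p (s + 1)) {i : ℕ} (hi : i < n) (hi0 : i < p 0) (F : Finset ℕ) :
    muMinus s (dd d) (pp s p) (cc s p F) i = d 1 + 1 := by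
  have hb0 : blkOf (pp s p) s i = 0 := (blk_top hp hs hi0).1
  rw [muMinus_eval hp hs hn hi, hb0]
  have hpp : pp s p 0 = p 0 + p 1 := by simp [pp]
  have hcc : cc s p F 0 ≤ p 1 := by
    have hp1 : 0 < p 1 := hp 1 le_rfl hs
    unfold cc
    have h01 : p (0 + 1) = p 1 := by norm_num
    rw [h01]
    split_ifs <;> omega
  have hcs : cumsum (pp s p) 0 = 0 := by simp [cumsum]
  rw [if_neg (by omega)]

lemma A_empty (hp : ∀ k, 1 ≤ k → k ≤ s → 0 < p k) (hs : 1 ≤ s)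
    (hn : n = cumsum p (s + 1)) {i : ℕ} (hi : i < n) (hi0 : p 0 ≤ i) :
    muMinus s (dd d) (pp s p) (cc s p ∅) i = d (blkOf (pp s p) s i + 1) := by
  obtain ⟨hb, hb1, hb2⟩ := blk_spec hp hs hn hi
  set b := blkOf (pp s p) s i with hbdef
  rw [muMinus_eval hp hs hn hi]
  rw [← hbdef]
  have hp1 : 0 < p 1 := hp 1 le_rfl hs
  rcases Nat.eq_zero_or_pos b with h0 | h1
  · have hpp : pp s p b = p 0 + p 1 := by simp [pp, h0]
    have hcc : cc s p ∅ b = p 1 := by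
      unfold cc
      rw [h0]
      have h01 : p (0 + 1) = p 1 := by norm_num
      rw [h01, if_pos ⟨hs, Finset.notMem_empty 0⟩]
      omega
    have hcs : cumsum (pp s p) b = 0 := by simp [h0, cumsum]
    rw [if_pos (by omega)]
  · have hpb : 0 < p (b + 1) := hp (b + 1) (by omega) (by omega)
    have hpp : pp s p b = p (b + 1) := by
      unfold pp
      have h1' : b ≠ 0 := by omega
      simp [h1', hb]
    have hcc : cc s p ∅ b = p (b + 1) := by
      unfold cc
      simp [hb]
      omega
    rw [if_pos (by omega)]

lemma exists_j0 (hp : ∀ k, 1 ≤ k → k ≤ s → 0 < p k) (hs : 1 ≤ s)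
    (hn : n = cumsum p (s + 1)) {F : Finset ℕ} (hF : F.Nonempty)
    (hFs : ↑F ⊆ ↑(Finset.range s)) :
    ∃ j, j < n ∧ p 0 ≤ j ∧
      muMinus s (dd d) (pp s p) (cc s p F) j = d (blkOf (pp s p) s j + 1) + 1 := by
  obtain ⟨k0, hk0⟩ := hF
  have hk0s : k0 < s := Finset.mem_range.mp (hFs hk0)
  have hp1 : 0 < p 1 := hp 1 le_rfl hs
  rcases Nat.eq_zero_or_pos k0 with h0 | h1
  · subst h0
    refine ⟨p 0, ?_, le_rfl, ?_⟩
    · have : cumsum p 2 ≤ cumsum p (s + 1) := cumsum_mono p (by omega)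
      have h2 : cumsum p 2 = p 0 + p 1 := by simp [cumsum, Finset.sum_range_succ]
      omega
    · have hin : p 0 < n := by
        have : cumsum p 2 ≤ cumsum p (s + 1) := cumsum_mono p (by omega)
        have h2 : cumsum p 2 = p 0 + p 1 := by simp [cumsum, Finset.sum_range_succ]
        omega
      have hb0 : blkOf (pp s p) s (p 0) = 0 := by
        apply blkOf_eq hs (by simp [cumsum])
        rw [cumsum_one]
        have : pp s p 0 = p 0 + p 1 := by simp [pp]
        omega
      rw [muMinus_eval hp hs hn hin, hb0]
      have hpp : pp s p 0 = p 0 + p 1 := by simp [pp]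
      have hcc : cc s p F 0 = p 1 - 1 := by
        unfold cc
        have h01 : p (0 + 1) = p 1 := by norm_num
        rw [h01]
        simp [hk0]
      have hcs : cumsum (pp s p) 0 = 0 := by simp [cumsum]
      rw [if_neg (by omega)]
  · refine ⟨cumsum p (k0 + 1), ?_, ?_, ?_⟩
    · have h2 : cumsum p (k0 + 1 + 1) ≤ cumsum p (s + 1) := cumsum_mono p (by omega)
      have h3 := cumsum_succ p (k0 + 1)
      have h4 : 0 < p (k0 + 1) := hp (k0 + 1) (by omega) (by omega)
      omega
    · calc p 0 = cumsum p 1 := (cumsum_one p).symm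
        _ ≤ cumsum p (k0 + 1) := cumsum_mono p (by omega)
    · have hin : cumsum p (k0 + 1) < n := by
        have h2 : cumsum p (k0 + 1 + 1) ≤ cumsum p (s + 1) := cumsum_mono p (by omega)
        have h3 := cumsum_succ p (k0 + 1)
        have h4 : 0 < p (k0 + 1) := hp (k0 + 1) (by omega) (by omega)
        omega
      have hbk : blkOf (pp s p) s (cumsum p (k0 + 1)) = k0 := by
        apply blkOf_eq hk0s
        · rw [cumsum_pp hp k0 h1 (by omega)]
        · rw [cumsum_pp hp (k0 + 1) (by omega) hk0s]
          have h3 := cumsum_succ p (k0 + 1)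
          have h4 : 0 < p (k0 + 1) := hp (k0 + 1) (by omega) (by omega)
          omega
      rw [muMinus_eval hp hs hn hin, hbk]
      have hpp : pp s p k0 = p (k0 + 1) := by
        unfold pp
        have : k0 ≠ 0 := by omega
        simp [this, hk0s]
      have hcc : cc s p F k0 = p (k0 + 1) - 1 := by
        unfold cc
        simp [hk0]
      have hcs : cumsum (pp s p) k0 = cumsum p (k0 + 1) := cumsum_pp hp k0 h1 (by omega)
      have h4 : 0 < p (k0 + 1) := hp (k0 + 1) (by omega) (by omega)
      rw [if_neg (by omega)]

lemma A_antitone (hp : ∀ k, 1 ≤ k → k ≤ s → 0 < p k) (hs : 1 ≤ s)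
    (hd : ∀ k, 1 ≤ k → k + 1 ≤ s → d (k + 1) < d k)
    (hn : n = cumsum p (s + 1)) {i j : ℕ} (hij : i ≤ j) (hj : j < n) (c : ℕ → ℕ) :
    muMinus s (dd d) (pp s p) c j ≤ muMinus s (dd d) (pp s p) c i := by
  have hi : i < n := by omega
  obtain ⟨hbi, hbi1, hbi2⟩ := blk_spec hp hs hn hi
  obtain ⟨hbj, hbj1, hbj2⟩ := blk_spec hp hs hn hj
  set bi := blkOf (pp s p) s i with hbidef
  set bj := blkOf (pp s p) s j with hbjdef
  have hble : bi ≤ bj := blkOf_mono (pp s p) s hij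
  rw [muMinus_eval hp hs hn hi c, muMinus_eval hp hs hn hj c, ← hbidef, ← hbjdef]
  rcases Nat.eq_or_lt_of_le hble with heq | hlt
  · rw [← heq]
    have hoff : i - cumsum (pp s p) bi ≤ j - cumsum (pp s p) bi := by omega
    split_ifs <;> omega
  · have hstrict : d (bj + 1) < d (bi + 1) := d_strict hd (bi + 1) (bj + 1) (by omega) (by omega) (by omega)
    split_ifs <;> omega

lemma rho_top {i : ℕ} (hp : ∀ k, 1 ≤ k → k ≤ s → 0 < p k) (hs : 1 ≤ s)
    (hi0 : i < p 0) : rhoOf s d p i = ⊤ := by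
  unfold rhoOf
  rw [(blk_top hp hs hi0).2]
  simp

lemma rho_fin (hp : ∀ k, 1 ≤ k → k ≤ s → 0 < p k) (hs : 1 ≤ s)
    (hn : n = cumsum p (s + 1)) {i : ℕ} (hi : i < n) (hi0 : p 0 ≤ i) :
    rhoOf s d p i = ((d (blkOf (pp s p) s i + 1) : ℕ) : ℕ∞) := by
  unfold rhoOf
  rw [blk_fin hp hs hn hi hi0]
  simp

end Vals

end S8
/-- Let `I` be a nonzero, proper `S_n`-invariant monomial ideal and
`ρ = (∞^{p_0}, d_1^{p_1}, …, d_s^{p_s}) ∈ Λ*_max(I)` a maximal dual generator, with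
`∞ > d_1 > ⋯ > d_s ≥ 0`.  Set `c = (p_1 - 1, …, p_s - 1)`.  Then `Γ^{ρ̃,c}(I) = {∅}`,
where `ρ̃ = ((d_1+1)^{p_0+p_1}, (d_2+1)^{p_2}, …, (d_s+1)^{p_s})`. -/
theorem statement_8 (K : Type) [Field K] (n : ℕ) (I : Ideal (MvPolynomial (Fin n) K))
    (hmon : IsMonomialIdeal K n I) (hsym : IsSymmetricIdeal K n I)
    (hne : I ≠ ⊥) (hproper : I ≠ ⊤)
    (Λ : Finset (Fin n → ℕ∞)) (hpres : IsDualPresentation K n I Λ)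
    (s : ℕ) (d p : ℕ → ℕ)
    (hn : n = cumsum p (s + 1))
    (hd : ∀ k, 1 ≤ k → k + 1 ≤ s → d (k + 1) < d k)
    (hp : ∀ k, 1 ≤ k → k ≤ s → 0 < p k)
    (ρ : Fin n → ℕ∞) (hρdef : ρ = fun i => rhoOf s d p i.val)
    (hρΛ : ρ ∈ Λ) (hmax : ∀ μ ∈ Λ, preceq n ρ μ → μ = ρ) :
    GammaCx K n I s (fun k => d (k + 1) + 1)
        (fun k => if k = 0 then p 0 + p 1 else if k < s then p (k + 1) else 0)
        (fun k => p (k + 1) - 1)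
      = {(∅ : Finset ℕ)} := by
  classical
  obtain ⟨hanti, hIeq, hirr⟩ := hpres
  have hone : (1 : MvPolynomial (Fin n) K) ∉ I := fun h =>
    hproper ((Ideal.eq_top_iff_one I).mpr h)
  have hmon_zero : mon K n (fun _ : Fin n => 0) = 1 := by
    have h0 : (Finsupp.equivFunOnFinite.symm (fun _ : Fin n => 0) : Fin n →₀ ℕ) = 0 := by
      ext i
      simp [Finsupp.coe_equivFunOnFinite_symm]
    rw [mon, h0, MvPolynomial.monomial_zero', MvPolynomial.C_1]
  rcases Nat.eq_zero_or_pos s with hs0 | hs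
  · subst hs0
    ext F
    simp only [GammaCx, Set.mem_setOf_eq, Set.mem_singleton_iff]
    constructor
    · rintro ⟨hFsub, -⟩
      exact Finset.subset_empty.mp (by simpa using hFsub)
    · rintro rfl
      refine ⟨by simp, ?_⟩
      have hmm : (fun i : Fin n => muMinus 0 (fun k => d (k + 1) + 1)
          (fun k => if k = 0 then p 0 + p 1 else if k < 0 then p (k + 1) else 0)
          (fun j => p (j + 1) - 1 + (if j < 0 ∧ j ∉ (∅ : Finset ℕ) then 1 else 0)) i.val)
          = fun _ : Fin n => 0 := by
        funext i
        simp [muMinus]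
      rw [hmm, hmon_zero]
      exact hone
  -- main case : 1 ≤ s
  have hs1 : 1 ≤ s := hs
  have hρ : ∀ i : Fin n, ρ i = rhoOf s d p i.val := fun i => by rw [hρdef]
  have hp1 : 0 < p 1 := hp 1 le_rfl hs1
  have hp0n : p 0 < n := by
    have h2 := S8.cumsum_mono p (show 2 ≤ s + 1 by omega)
    have h2' : cumsum p 2 = p 0 + p 1 := by
      simp [cumsum, Finset.sum_range_succ]
    omega
  -- the block of a position
  set bk : Fin n → ℕ := fun i => blkOf (S8.pp s p) s i.val with hbk
  -- ρ description
  have hρtop : ∀ i : Fin n, i.val < p 0 → ρ i = ⊤ := fun i hi => by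
    rw [hρ i]; exact S8.rho_top hp hs1 hi
  have hρfin : ∀ i : Fin n, p 0 ≤ i.val → ρ i = ((d (bk i + 1) : ℕ) : ℕ∞) := fun i hi => by
    rw [hρ i]; exact S8.rho_fin hp hs1 hn i.isLt hi
  have hρtop_iff : ∀ i : Fin n, ρ i = ⊤ ↔ i.val < p 0 := by
    intro i
    constructor
    · intro h
      by_contra hc
      rw [hρfin i (by omega)] at h
      exact (ENat.coe_ne_top _) h
    · exact hρtop i
  have hbk0 : blkOf (S8.pp s p) s (p 0) = 0 := by
    apply S8.blkOf_eq hs1 (by simp [cumsum])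
    rw [S8.cumsum_one]
    have hppv : S8.pp s p 0 = p 0 + p 1 := by simp [S8.pp]
    omega
  have htopVal : topVal n ρ = d 1 := by
    apply le_antisymm
    · apply Finset.sup_le
      intro i _
      by_cases hi : i.val < p 0
      · rw [hρtop i hi]; simp
      · rw [hρfin i (by omega)]
        simp only [ENat.toNat_coe]
        have hblt : bk i < s := (S8.blk_spec hp hs1 hn i.isLt).1
        exact S8.d_mono hd 1 (bk i + 1) le_rfl (by omega) (by omega)
    · have hle := Finset.le_sup (f := fun i : Fin n => (ρ i).toNat)
        (Finset.mem_univ (⟨p 0, hp0n⟩ : Fin n))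
      have hbb : bk (⟨p 0, hp0n⟩ : Fin n) = 0 := hbk0
      have hvv : (ρ (⟨p 0, hp0n⟩ : Fin n)).toNat = d 1 := by
        rw [hρfin ⟨p 0, hp0n⟩ le_rfl, hbb]
        simp
      rw [topVal, ← hvv]
      exact hle
  have hρtilde : ∀ i : Fin n, tildeOf n ρ i = d (bk i + 1) + 1 := by
    intro i
    unfold tildeOf
    by_cases hi : i.val < p 0
    · rw [if_pos (hρtop i hi), htopVal]
      have : bk i = 0 := by
        rw [hbk]
        exact (S8.blk_top hp hs1 hi).1
      rw [this]
    · rw [if_neg (by rw [hρtop_iff]; omega), hρfin i (by omega)]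
      simp
  have hell : ∀ μ : Fin n → ℕ∞,
      ellInf n μ = ∑ i : Fin n, (if μ i = ⊤ then 1 else 0) := by
    intro μ
    rw [ellInf, Finset.card_filter]
  -- Now the set equality
  ext F
  simp only [GammaCx, Set.mem_setOf_eq, Set.mem_singleton_iff]
  have hAeq : (fun i : Fin n => muMinus s (fun k => d (k + 1) + 1)
      (fun k => if k = 0 then p 0 + p 1 else if k < s then p (k + 1) else 0)
      (fun j => p (j + 1) - 1 + (if j < s ∧ j ∉ F then 1 else 0)) i.val)
      = fun i : Fin n => muMinus s (S8.dd d) (S8.pp s p) (S8.cc s p F) i.val := rfl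
  constructor
  · rintro ⟨hFsub, hnotmem⟩
    by_contra hFne
    have hFne' : F.Nonempty := Finset.nonempty_iff_ne_empty.mpr hFne
    apply hnotmem
    rw [hAeq, hIeq]
    simp only [Submodule.mem_iInf]
    intro τ hτΛ
    by_contra hnotQ
    rw [S8.mem_Qgen_iff] at hnotQ
    push_neg at hnotQ
    obtain ⟨σ, hσ⟩ := hnotQ
    -- pointwise domination
    have hAanti : Antitone (fun i : Fin n => muMinus s (S8.dd d) (S8.pp s p) (S8.cc s p F) i.val) := by
      intro i j hij
      exact S8.A_antitone hp hs1 hd hn hij j.isLt _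
    have h1 : ∀ i : Fin n,
        ((muMinus s (S8.dd d) (S8.pp s p) (S8.cc s p F) i.val : ℕ) : ℕ∞) ≤ τ i := by
      apply S8.antitone_compare hAanti (hanti τ hτΛ) σ
      intro i
      by_cases hti : τ i = ⊤
      · rw [hti]; exact le_top
      · have := hσ i hti
        have hcast : ((τ i).toNat : ℕ∞) = τ i := ENat.coe_toNat hti
        rw [← hcast]
        exact_mod_cast by omega
    obtain ⟨j0, hj0n, hj0p0, hj0A⟩ := S8.exists_j0 hp hs1 hn hFne' (by
      exact_mod_cast Finset.coe_subset.mpr hFsub)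
    by_cases hτρ : τ = ρ
    · -- contradiction with λ ≰ ρ at j0
      have h1j := h1 ⟨j0, hj0n⟩
      rw [hτρ, hρfin ⟨j0, hj0n⟩ hj0p0] at h1j
      have : muMinus s (S8.dd d) (S8.pp s p) (S8.cc s p F) j0 ≤ d (bk ⟨j0, hj0n⟩ + 1) := by
        exact_mod_cast h1j
      have hbeq : bk ⟨j0, hj0n⟩ = blkOf (S8.pp s p) s j0 := rfl
      rw [hbeq, hj0A] at this
      omega
    · -- the antichain property
      have hnotle : ¬ ∀ i : Fin n, ρ i ≤ τ i := by
        intro hle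
        apply hirr ρ hρΛ
        apply le_antisymm
        · rw [hIeq]
          exact le_iInf₂ fun μ hμ => le_iInf fun _ => iInf₂_le μ hμ
        · rw [hIeq]
          refine le_iInf₂ fun μ hμ => ?_
          by_cases hμρ : μ = ρ
          · subst hμρ
            calc (⨅ ρ' ∈ Λ, ⨅ _ : ρ' ≠ μ, Qgen K n ρ')
                ≤ Qgen K n τ := by
                  refine le_trans (iInf₂_le τ hτΛ) ?_
                  exact iInf_le _ (by exact hτρ)
              _ ≤ Qgen K n μ := S8.Qgen_anti K n hle
          · exact le_trans (iInf₂_le μ hμ) (iInf_le _ hμρ)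
      push_neg at hnotle
      obtain ⟨i0, hi0⟩ := hnotle
      -- part (i) of preceq
      have hpart1 : ∀ i : Fin n, tildeOf n ρ i ≤ tildeOf n τ i := by
        intro i
        rw [hρtilde i]
        by_cases hti : τ i = ⊤
        · rw [tildeOf, if_pos hti]
          by_contra hlt
          push_neg at hlt
          -- then ρ ≤ τ everywhere, contradiction
          -- first : every ρ-infinite position is τ-infinite
          have key : ∀ j : Fin n, ρ j ≤ τ j := by
            intro j
            by_cases hρj : ρ j = ⊤
            · have hjp0 : j.val < p 0 := (hρtop_iff j).mp hρj
              by_cases hτj : τ j = ⊤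
              · rw [hρj, hτj]
              · exfalso
                have hAj : muMinus s (S8.dd d) (S8.pp s p) (S8.cc s p F) j.val = d 1 + 1 :=
                  S8.A_top hp hs1 hn j.isLt hjp0 F
                have h1j := h1 j
                rw [hAj] at h1j
                have hle' : (d 1 + 1 : ℕ) ≤ (τ j).toNat := by
                  have hcast : ((τ j).toNat : ℕ∞) = τ j := ENat.coe_toNat hτj
                  rw [← hcast] at h1j
                  exact_mod_cast h1j
                have hsup : (τ j).toNat ≤ topVal n τ :=
                  Finset.le_sup (f := fun i : Fin n => (τ i).toNat) (Finset.mem_univ j)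
                have hd1 : d (bk i + 1) ≤ d 1 := by
                  have hblt : bk i < s := (S8.blk_spec hp hs1 hn i.isLt).1
                  exact S8.d_mono hd 1 (bk i + 1) le_rfl (by omega) (by omega)
                omega
            · have hjp0 : p 0 ≤ j.val := by
                by_contra hc
                exact hρj (hρtop j (by omega))
              rw [hρfin j hjp0]
              refine le_trans ?_ (h1 j)
              have := (S8.A_bounds (d := d) hp hs1 hn j.isLt (S8.cc s p F)).1
              exact_mod_cast this
          exact absurd (key i0) (not_le.mpr hi0)
        · rw [tildeOf, if_neg hti]
          have h1i := h1 i
          have hcast : ((τ i).toNat : ℕ∞) = τ i := ENat.coe_toNat hti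
          rw [← hcast] at h1i
          have hAle : muMinus s (S8.dd d) (S8.pp s p) (S8.cc s p F) i.val ≤ (τ i).toNat := by
            exact_mod_cast h1i
          have hAge := (S8.A_bounds (d := d) hp hs1 hn i.isLt (S8.cc s p F)).1
          have hbb : bk i = blkOf (S8.pp s p) s i.val := rfl
          rw [hbb]
          omega
      -- part (ii) of preceq
      have hpart2 : (∑ i : Fin n, tildeOf n ρ i) + ellInf n ρ ≤
          (∑ i : Fin n, tildeOf n τ i) + ellInf n τ := by
        rw [hell ρ, hell τ, ← Finset.sum_add_distrib, ← Finset.sum_add_distrib]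
        apply Finset.sum_le_sum
        intro i _
        by_cases hρi : ρ i = ⊤
        · rw [if_pos hρi]
          by_cases hti : τ i = ⊤
          · rw [if_pos hti]
            exact Nat.add_le_add_right (hpart1 i) 1
          · rw [if_neg hti]
            have hip0 : i.val < p 0 := (hρtop_iff i).mp hρi
            have hAi : muMinus s (S8.dd d) (S8.pp s p) (S8.cc s p F) i.val = d 1 + 1 :=
              S8.A_top hp hs1 hn i.isLt hip0 F
            have h1i := h1 i
            have hcast : ((τ i).toNat : ℕ∞) = τ i := ENat.coe_toNat hti
            rw [← hcast, hAi] at h1i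
            have hle' : (d 1 + 1 : ℕ) ≤ (τ i).toNat := by exact_mod_cast h1i
            rw [hρtilde i, tildeOf, if_neg hti]
            have hbk0' : bk i = 0 := by
              rw [hbk]
              exact (S8.blk_top hp hs1 hip0).1
            rw [hbk0']
            have h01 : d (0 + 1) = d 1 := by norm_num
            omega
        · rw [if_neg hρi]
          have hpi := hpart1 i
          split_ifs <;> omega
      have : τ = ρ := hmax τ hτΛ ⟨hpart1, hpart2⟩
      exact hτρ this
  · rintro rfl
    refine ⟨by simp, ?_⟩
    intro hmem
    have hIQ : I ≤ Qgen K n ρ := le_of_eq hIeq |>.trans (iInf₂_le ρ hρΛ)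
    have hmem' := hIQ hmem
    rw [hAeq] at hmem'
    rw [S8.mem_Qgen_iff] at hmem'
    obtain ⟨i, hitop, hige⟩ := hmem' 1
    simp only [Equiv.Perm.one_apply] at hige
    have hip0 : p 0 ≤ i.val := by
      by_contra hc
      exact hitop (hρtop i (by omega))
    have hAi : muMinus s (S8.dd d) (S8.pp s p) (S8.cc s p ∅) i.val = d (bk i + 1) :=
      S8.A_empty hp hs1 hn i.isLt hip0
    rw [hAi] at hige
    rw [hρfin i hip0] at hige
    simp only [ENat.toNat_coe] at hige
    omega
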